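/- Let f be a rank function on E = {1,...,a} and let S^(0), S^(1), ..., S^(t) be a partition of E. Set T^(j) = S^(0) ∪ ... ∪ S^(j−1) (with T^(0) = ∅) and define the rank function f^(j)(S) = f(S ∪ T^(j)) − f(T^(j)) for S ⊆ S^(j). Let m^(0),...,m^(t) be real numbers and define x* ∈ ℝ^a by x*_i = m^(j) for i ∈ S^(j). Suppose for each j there exist nonnegative coefficients λ^(j)_γ indexed by the permutations π^(j)_γ of S^(j), with Σ_γ λ^(j)_γ = 1, such that the constant vector (m^(j),...,m^(j)) on S^(j) equals Σ_γ λ^(j)_γ u^(j)(π^(j)_γ), where u^(j)(π^(j)_γ) is the corner point of B(f^(j), S^(j)) for permutation π^(j)_γ. Then x* is the convex combination of corner points of B(f,E): x* = Σ_{γ_0} ... Σ_{γ_t} ( λ^(0)_{γ_0} · λ^(1)_{γ_1} · ... · λ^(t)_{γ_t} ) v(π(γ_0,...,γ_t)), where π(γ_0,...,γ_t) is the permutation of E listing S^(0) in order π^(0)_{γ_0} first, then S^(1) in order π^(1)_{γ_1}, ..., and finally S^(t) in order π^(t)_{γ_t}, and v(·) denotes the corner point of B(f,E). -/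

import Mathlib

open Finset

/-- A rank function on the finite ground set: normalized, increasing and submodular. -/
def IsRankFunction {α : Type*} [DecidableEq α] (f : Finset α → ℝ) : Prop :=
  f ∅ = 0 ∧ (∀ S T : Finset α, S ⊆ T → f S ≤ f T) ∧
    (∀ S T : Finset α, f (S ∩ T) + f (S ∪ T) ≤ f S + f T)

/-- `{π(1), …, π(α)}`: the elements occupying the first positions of the
permutation `π`, up to and including position `α`. -/
def prefixUpTo {a : ℕ} (π : Equiv.Perm (Fin a)) (α : Fin a) : Finset (Fin a) :=
  (Finset.univ.filter fun k => k ≤ α).image π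

/-- `{π(1), …, π(α−1)}`: the elements occupying the positions of `π` strictly
before position `α`. -/
def prefixBelow {a : ℕ} (π : Equiv.Perm (Fin a)) (α : Fin a) : Finset (Fin a) :=
  (Finset.univ.filter fun k => k < α).image π

/-- The corner point `v(π)` of the polymatroid `B(f,E)` for the permutation `π`,
indexed by the ground set. -/
def cornerPoint {a : ℕ} (f : Finset (Fin a) → ℝ) (π : Equiv.Perm (Fin a))
    (i : Fin a) : ℝ :=
  f (prefixUpTo π (π.symm i)) - f (prefixBelow π (π.symm i))

/-- `T⁽ʲ⁾ = S⁽⁰⁾ ∪ ⋯ ∪ S⁽ʲ⁻¹⁾`: the union of the blocks preceding block `j`. -/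
def cumUnion {a t : ℕ} (S : Fin (t + 1) → Finset (Fin a)) (j : Fin (t + 1)) :
    Finset (Fin a) :=
  (Finset.univ.filter fun i => i < j).biUnion S

/-- A permutation of the block `S⁽ʲ⁾`, given as a bijective enumeration of its
elements. -/
abbrev BlockPerm {a t : ℕ} (S : Fin (t + 1) → Finset (Fin a)) (j : Fin (t + 1)) :=
  Fin (S j).card ≃ {y : Fin a // y ∈ S j}

/-- The corner point `u⁽ʲ⁾(π⁽ʲ⁾)` of the polymatroid `B(f⁽ʲ⁾, S⁽ʲ⁾)`, where
`f⁽ʲ⁾(U) = f(U ∪ T⁽ʲ⁾) − f(T⁽ʲ⁾)`, for the permutation `σ` of `S⁽ʲ⁾`, evaluated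
at the coordinate `i ∈ S⁽ʲ⁾`. -/
def blockCorner {a t : ℕ} (f : Finset (Fin a) → ℝ) (S : Fin (t + 1) → Finset (Fin a))
    (j : Fin (t + 1)) (σ : BlockPerm S j) (i : {y : Fin a // y ∈ S j}) : ℝ :=
  (f (((Finset.univ.filter fun k => k ≤ σ.symm i).image fun k => (σ k : Fin a)) ∪
        cumUnion S j) - f (cumUnion S j)) -
  (f (((Finset.univ.filter fun k => k < σ.symm i).image fun k => (σ k : Fin a)) ∪
        cumUnion S j) - f (cumUnion S j))

/-- let `S⁽⁰⁾, …, S⁽ᵗ⁾` partition `E` and `x*_i = m⁽ʲ⁾` for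
`i ∈ S⁽ʲ⁾`.  Suppose for each `j` there are convex coefficients `λ⁽ʲ⁾` on the
permutations of `S⁽ʲ⁾` expressing the constant vector `m⁽ʲ⁾·1` as the convex
combination `∑_γ λ⁽ʲ⁾_γ u⁽ʲ⁾(π⁽ʲ⁾_γ)` of the corner points of `B(f⁽ʲ⁾, S⁽ʲ⁾)`.
Then `x*` is the convex combination of the corner points of `B(f,E)` given by the
concatenated permutations `π(γ₀,…,γ_t)` (listing `S⁽⁰⁾` in order `γ₀` first, …,
finally `S⁽ᵗ⁾` in order `γ_t`), with coefficients `∏_j λ⁽ʲ⁾_{γ_j}`. -/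
theorem stmt12 (a t : ℕ) (f : Finset (Fin a) → ℝ) (hf : IsRankFunction f)
    (S : Fin (t + 1) → Finset (Fin a))
    (hdisj : ∀ j k, j ≠ k → Disjoint (S j) (S k))
    (hcover : (Finset.univ : Finset (Fin (t + 1))).biUnion S = Finset.univ)
    (m : Fin (t + 1) → ℝ) (x : Fin a → ℝ) (hx : ∀ j, ∀ i ∈ S j, x i = m j)
    (lam : (j : Fin (t + 1)) → BlockPerm S j → ℝ)
    (hlam0 : ∀ j σ, 0 ≤ lam j σ)
    (hlam1 : ∀ j, ∑ σ : BlockPerm S j, lam j σ = 1)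
    (hconv : ∀ j, ∀ i : {y : Fin a // y ∈ S j},
      m j = ∑ σ : BlockPerm S j, lam j σ * blockCorner f S j σ i)
    (concat : ((j : Fin (t + 1)) → BlockPerm S j) → Equiv.Perm (Fin a))
    (hconcat_blocks : ∀ γ, ∀ (p q : Fin a) (j j' : Fin (t + 1)),
      concat γ p ∈ S j → concat γ q ∈ S j' → p ≤ q → j ≤ j')
    (hconcat_order : ∀ γ, ∀ j : Fin (t + 1), ∀ k k' : Fin (S j).card, k ≤ k' →
      (concat γ).symm (γ j k : Fin a) ≤ (concat γ).symm (γ j k' : Fin a)) :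
    ∀ i : Fin a,
      x i = ∑ γ : (j : Fin (t + 1)) → BlockPerm S j,
        (∏ j, lam j (γ j)) * cornerPoint f (concat γ) i := by
  intro i
  obtain ⟨j, -, hij⟩ := Finset.mem_biUnion.mp (hcover ▸ Finset.mem_univ i)
  have hblockOf : ∀ x : Fin a, ∃ j', x ∈ S j' := by
    intro x
    obtain ⟨j', -, h⟩ := Finset.mem_biUnion.mp (hcover ▸ Finset.mem_univ x)
    exact ⟨j', h⟩
  have key : ∀ γ : (j : Fin (t+1)) → BlockPerm S j,
      cornerPoint f (concat γ) i = blockCorner f S j (γ j) ⟨i, hij⟩ := by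
    intro γ
    set π := concat γ with hπ
    set σ := γ j with hσ
    have hmono : Monotone fun k => π.symm ((σ k : Fin a)) := by
      intro k k' hkk'; exact hconcat_order γ j k k' hkk'
    have hinj : Function.Injective fun k => π.symm ((σ k : Fin a)) := by
      intro k k' h
      exact σ.injective (Subtype.coe_injective (π.symm.injective h))
    have hsm : StrictMono fun k => π.symm ((σ k : Fin a)) := hmono.strictMono_of_injective hinj
    have hpi : π.symm ((σ (σ.symm ⟨i, hij⟩) : Fin a)) = π.symm i := by
      rw [Equiv.apply_symm_apply]
    have hle : ∀ (q : Fin a) (j' : Fin (t+1)), π q ∈ S j' → j' < j → q ≤ π.symm i := by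
      intro q j' hq hj'
      by_contra hc
      push_neg at hc
      exact absurd (hconcat_blocks γ (π.symm i) q j j'
        (show π (π.symm i) ∈ S j by simpa using hij) hq hc.le) (not_le.mpr hj')
    have hup : prefixUpTo π (π.symm i) =
        ((Finset.univ.filter fun k => k ≤ σ.symm ⟨i, hij⟩).image fun k => (σ k : Fin a)) ∪
          cumUnion S j := by
      ext y
      simp only [prefixUpTo, cumUnion, Finset.mem_image, Finset.mem_filter, Finset.mem_univ,
        true_and, Finset.mem_union, Finset.mem_biUnion]
      constructor
      · rintro ⟨q, hq, rfl⟩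
        obtain ⟨j', hj'⟩ := hblockOf (π q)
        have hjle : j' ≤ j := hconcat_blocks γ q (π.symm i) j' j hj' (show π (π.symm i) ∈ S j by simpa using hij) hq
        rcases eq_or_lt_of_le hjle with heq | hlt
        · subst heq
          left
          refine ⟨σ.symm ⟨π q, hj'⟩, ?_, by simp⟩
          have h2 : π.symm ((σ (σ.symm ⟨π q, hj'⟩) : Fin a)) ≤
              π.symm ((σ (σ.symm ⟨i, hij⟩) : Fin a)) := by
            rw [hpi]
            simpa using hq
          exact hsm.le_iff_le.mp h2
        · exact Or.inr ⟨j', hlt, hj'⟩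
      · rintro (⟨k, hk, rfl⟩ | ⟨j', hj', hy⟩)
        · refine ⟨π.symm ((σ k : Fin a)), ?_, by simp⟩
          have := hconcat_order γ j k (σ.symm ⟨i, hij⟩) hk
          rwa [hpi] at this
        · exact ⟨π.symm y, hle (π.symm y) j' (by simpa using hy) hj', by simp⟩
    have hbelow : prefixBelow π (π.symm i) =
        ((Finset.univ.filter fun k => k < σ.symm ⟨i, hij⟩).image fun k => (σ k : Fin a)) ∪
          cumUnion S j := by
      ext y
      simp only [prefixBelow, cumUnion, Finset.mem_image, Finset.mem_filter, Finset.mem_univ,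
        true_and, Finset.mem_union, Finset.mem_biUnion]
      constructor
      · rintro ⟨q, hq, rfl⟩
        obtain ⟨j', hj'⟩ := hblockOf (π q)
        have hjle : j' ≤ j := hconcat_blocks γ q (π.symm i) j' j hj' (show π (π.symm i) ∈ S j by simpa using hij) hq.le
        rcases eq_or_lt_of_le hjle with heq | hlt
        · subst heq
          left
          refine ⟨σ.symm ⟨π q, hj'⟩, ?_, by simp⟩
          have h2 : π.symm ((σ (σ.symm ⟨π q, hj'⟩) : Fin a)) <
              π.symm ((σ (σ.symm ⟨i, hij⟩) : Fin a)) := by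
            rw [hpi]
            simpa using hq
          exact hsm.lt_iff_lt.mp h2
        · exact Or.inr ⟨j', hlt, hj'⟩
      · rintro (⟨k, hk, rfl⟩ | ⟨j', hj', hy⟩)
        · refine ⟨π.symm ((σ k : Fin a)), ?_, by simp⟩
          have h3 := hsm hk
          simp only [] at h3
          rwa [hpi] at h3
        · refine ⟨π.symm y, ?_, by simp⟩
          have h1 : π.symm y ≤ π.symm i := hle (π.symm y) j' (by simpa using hy) hj'
          rcases h1.lt_or_eq with h | h
          · exact h
          · exfalso
            have : y = i := by
              have := congrArg π h
              simpa using this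
            subst this
            exact (Finset.disjoint_left.mp (hdisj j' j hj'.ne) hy) hij
    unfold cornerPoint blockCorner
    rw [hup, hbelow]
    ring
  rw [hx j i hij, hconv j ⟨i, hij⟩]
  have hterm : ∀ γ : (j : Fin (t+1)) → BlockPerm S j,
      (∏ j', lam j' (γ j')) * cornerPoint f (concat γ) i =
        ∏ j', (lam j' (γ j') *
          (if h : j' = j then blockCorner f S j (h ▸ γ j') ⟨i, hij⟩ else 1)) := by
    intro γ
    rw [Finset.prod_mul_distrib, key γ]
    congr 1
    rw [← Finset.mul_prod_erase Finset.univ _ (Finset.mem_univ j),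
      Finset.prod_eq_one (fun j' hj' => dif_neg (Finset.ne_of_mem_erase hj')), mul_one,
      dif_pos rfl]
  calc ∑ σ : BlockPerm S j, lam j σ * blockCorner f S j σ ⟨i, hij⟩
      = ∏ j', ∑ σ : BlockPerm S j', (lam j' σ *
          (if h : j' = j then blockCorner f S j (h ▸ σ) ⟨i, hij⟩ else 1)) := by
        rw [← Finset.mul_prod_erase Finset.univ _ (Finset.mem_univ j),
          Finset.prod_eq_one (fun j' hj' => by
            rw [Finset.sum_congr rfl (fun σ _ => by
              rw [dif_neg (Finset.ne_of_mem_erase hj'), mul_one])]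
            exact hlam1 j'), mul_one]
        exact Finset.sum_congr rfl (fun σ _ => by rw [dif_pos rfl])
    _ = ∑ γ : (j : Fin (t+1)) → BlockPerm S j, ∏ j', (lam j' (γ j') *
          (if h : j' = j then blockCorner f S j (h ▸ γ j') ⟨i, hij⟩ else 1)) := by
        rw [Finset.prod_univ_sum]
        rw [← Fintype.piFinset_univ]
    _ = ∑ γ : (j : Fin (t+1)) → BlockPerm S j,
          (∏ j', lam j' (γ j')) * cornerPoint f (concat γ) i := by
        exact Finset.sum_congr rfl (fun γ _ => (hterm γ).symm)
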